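/- arXiv:2011.08248 — 4 statements merged into one kernel-verified Lean document; each statement's English description precedes it below -/
import Mathlib

section
/- Let b : ℝ → ℝ be differentiable on [0,∞) and let α : ℝ → ℝ be an extended class K function, i.e. strictly increasing with α(0) = 0. If b(0) ≥ 0 and for every t ≥ 0 the derivative satisfies b'(t) + α(b(t)) ≥ 0, then b(t) ≥ 0 for all t ≥ 0. -/
/-- Scalar (relative degree one) CBF forward-invariance theorem along a trajectory:
if `b` is differentiable on `[0, ∞)`, `α` is an extended class K function
(strictly increasing with `α 0 = 0`), `b 0 ≥ 0`, and the differential inequality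
`b'(t) + α (b t) ≥ 0` holds for all `t ≥ 0`, then `b t ≥ 0` for all `t ≥ 0`. -/
theorem cbf_forward_invariance_relative_degree_one
    (b α : ℝ → ℝ)
    (hα_mono : StrictMono α) (hα0 : α 0 = 0)
    (hb_diff : ∀ t : ℝ, 0 ≤ t → DifferentiableAt ℝ b t)
    (hb0 : 0 ≤ b 0)
    (hineq : ∀ t : ℝ, 0 ≤ t → deriv b t + α (b t) ≥ 0) :
    ∀ t : ℝ, 0 ≤ t → 0 ≤ b t := by
  intro T hT
  by_contra hneg
  push_neg at hneg
  -- continuity of b at points ≥ 0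
  have hcont : ∀ t : ℝ, 0 ≤ t → ContinuousAt b t := fun t ht =>
    (hb_diff t ht).continuousAt
  set A : Set ℝ := {t | t ∈ Set.Icc (0:ℝ) T ∧ 0 ≤ b t} with hA
  have hA_sub : A ⊆ Set.Icc 0 T := fun t ht => ht.1
  have hA_ne : A.Nonempty := ⟨0, ⟨le_refl 0, hT⟩, hb0⟩
  have hA_bdd : BddAbove A := ⟨T, fun t ht => ht.1.2⟩
  have hA_closed : IsClosed A := by
    have hcontOn : ContinuousOn b (Set.Icc 0 T) := fun t ht =>
      (hcont t ht.1).continuousWithinAt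
    have : A = Set.Icc 0 T ∩ b ⁻¹' Set.Ici 0 := by
      ext t; simp [hA, Set.mem_Icc, and_assoc]
    rw [this]
    exact (hcontOn.preimage_isClosed_of_isClosed isClosed_Icc isClosed_Ici)
  set t0 : ℝ := sSup A with ht0
  have ht0A : t0 ∈ A := hA_closed.csSup_mem hA_ne hA_bdd
  have ht00 : 0 ≤ t0 := ht0A.1.1
  have ht0T : t0 ≤ T := ht0A.1.2
  have hTA : T ∉ A := fun h => absurd h.2 (not_le.mpr hneg)
  have ht0T' : t0 < T := lt_of_le_of_ne ht0T (fun h => hTA (h ▸ ht0A))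
  -- on (t0, T], b < 0
  have hbneg : ∀ t, t ∈ Set.Ioc t0 T → b t < 0 := by
    intro t ht
    by_contra h
    push_neg at h
    have : t ∈ A := ⟨⟨le_trans ht00 ht.1.le, ht.2⟩, h⟩
    exact absurd (le_csSup hA_bdd this) (not_le.mpr ht.1)
  -- deriv b > 0 on interior
  have hderiv : ∀ t ∈ Set.Ioo t0 T, 0 < deriv b t := by
    intro t ht
    have htpos : 0 ≤ t := le_trans ht00 ht.1.le
    have hbt : b t < 0 := hbneg t ⟨ht.1, ht.2.le⟩
    have hαt : α (b t) < 0 := hα0 ▸ hα_mono hbt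
    have := hineq t htpos
    linarith
  have hmono : StrictMonoOn b (Set.Icc t0 T) := by
    apply strictMonoOn_of_deriv_pos (convex_Icc t0 T)
    · exact fun t ht => (hcont t (le_trans ht00 ht.1)).continuousWithinAt
    · intro t ht
      rw [interior_Icc] at ht
      exact hderiv t ht
  have : b t0 < b T := hmono ⟨le_refl _, ht0T⟩ ⟨ht0T, le_refl _⟩ ht0T'
  have : 0 ≤ b t0 := ht0A.2
  linarith
end

section
/- Let m ≥ 1 and let ψ₀, ψ₁, …, ψ_m : ℝ → ℝ be functions such that for each i ∈ {0, …, m−1}, ψ_i is differentiable on [0,∞) and ψ_{i+1}(t) = ψ_i'(t) + α_{i+1}(ψ_i(t)) for all t ≥ 0, where each α_{i+1} : ℝ → ℝ is an extended class K function (strictly increasing with α_{i+1}(0) = 0). If ψ_i(0) ≥ 0 for all i ∈ {0, …, m−1} and ψ_m(t) ≥ 0 for all t ≥ 0, then ψ_i(t) ≥ 0 for all t ≥ 0 and all i ∈ {0, …, m−1}. -/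
/-- Comparison lemma: if `f' + g ∘ f ≥ 0` on `[0,∞)` with `g` an extended
class K function and `f 0 ≥ 0`, then `f ≥ 0` on `[0,∞)`. -/
lemma hocbf_single_step (f g : ℝ → ℝ)
    (hg : StrictMono g) (hg0 : g 0 = 0)
    (hdf : ∀ t : ℝ, 0 ≤ t → DifferentiableAt ℝ f t)
    (hineq : ∀ t : ℝ, 0 ≤ t → 0 ≤ deriv f t + g (f t))
    (h0 : 0 ≤ f 0) :
    ∀ t : ℝ, 0 ≤ t → 0 ≤ f t := by
  intro t₁ ht₁
  by_contra hneg
  push_neg at hneg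
  have hcont : ContinuousOn f (Set.Icc 0 t₁) := fun x hx =>
    (hdf x hx.1).continuousAt.continuousWithinAt
  set A : Set ℝ := Set.Icc 0 t₁ ∩ f ⁻¹' Set.Ici 0 with hA
  have hclosedA : IsClosed A :=
    hcont.preimage_isClosed_of_isClosed isClosed_Icc isClosed_Ici
  have h0A : (0 : ℝ) ∈ A := ⟨⟨le_refl 0, ht₁⟩, h0⟩
  have hbdd : BddAbove A := ⟨t₁, fun x hx => hx.1.2⟩
  set s := sSup A with hs
  have hsA : s ∈ A := hclosedA.csSup_mem ⟨0, h0A⟩ hbdd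
  have hst₁ : s ≤ t₁ := hsA.1.2
  have hs0 : 0 ≤ s := hsA.1.1
  have hfs : 0 ≤ f s := hsA.2
  have hsne : s ≠ t₁ := fun h => absurd hfs (by rw [h]; exact not_le.2 hneg)
  have hslt : s < t₁ := lt_of_le_of_ne hst₁ hsne
  have hnegOn : ∀ x ∈ Set.Ioc s t₁, f x < 0 := by
    intro x hx
    by_contra hge
    push_neg at hge
    have : x ∈ A := ⟨⟨hs0.trans hx.1.le, hx.2⟩, hge⟩
    exact absurd (le_csSup hbdd this) (not_le.2 hx.1)
  have hmono : MonotoneOn f (Set.Icc s t₁) := by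
    apply monotoneOn_of_deriv_nonneg (convex_Icc s t₁)
    · exact hcont.mono (Set.Icc_subset_Icc hs0 le_rfl)
    · intro x hx
      rw [interior_Icc] at hx
      exact (hdf x (hs0.trans hx.1.le)).differentiableWithinAt
    · intro x hx
      rw [interior_Icc] at hx
      have hx0 : 0 ≤ x := hs0.trans hx.1.le
      have hfx : f x < 0 := hnegOn x ⟨hx.1, hx.2.le⟩
      have : g (f x) < 0 := hg0 ▸ hg hfx
      linarith [hineq x hx0]
  have := hmono (Set.left_mem_Icc.2 hslt.le) (Set.right_mem_Icc.2 hslt.le) hslt.le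
  linarith

/-- Theorem 1 (HOCBF forward invariance) along a trajectory: given functions
`ψ 0, …, ψ m` with `ψ (i+1) t = (ψ i)'(t) + α (i+1) (ψ i t)` for `i < m`,
where each `α (i+1)` is an extended class K function, if `ψ i 0 ≥ 0` for all
`i < m` and `ψ m t ≥ 0` for all `t ≥ 0`, then `ψ i t ≥ 0` for all `t ≥ 0`
and all `i < m`. -/
theorem hocbf_forward_invariance
    (m : ℕ) (hm : 1 ≤ m)
    (ψ : ℕ → ℝ → ℝ) (α : ℕ → ℝ → ℝ)
    (hα_mono : ∀ i, 1 ≤ i → i ≤ m → StrictMono (α i))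
    (hα0 : ∀ i, 1 ≤ i → i ≤ m → α i 0 = 0)
    (hdiff : ∀ i < m, ∀ t : ℝ, 0 ≤ t → DifferentiableAt ℝ (ψ i) t)
    (hrec : ∀ i < m, ∀ t : ℝ, 0 ≤ t →
      ψ (i + 1) t = deriv (ψ i) t + α (i + 1) (ψ i t))
    (hinit : ∀ i < m, 0 ≤ ψ i 0)
    (hm_nonneg : ∀ t : ℝ, 0 ≤ t → 0 ≤ ψ m t) :
    ∀ i < m, ∀ t : ℝ, 0 ≤ t → 0 ≤ ψ i t := by
  -- downward induction: for all j ≤ m, ψ (m - j) ≥ 0 on [0,∞)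
  have key : ∀ j ≤ m, ∀ t : ℝ, 0 ≤ t → 0 ≤ ψ (m - j) t := by
    intro j
    induction j with
    | zero => simpa using hm_nonneg
    | succ k ih =>
      intro hk t ht
      have hkm : k ≤ m := (Nat.le_succ k).trans hk
      have hi : m - (k + 1) < m := Nat.sub_lt (Nat.lt_of_lt_of_le Nat.zero_lt_one hm) (Nat.succ_pos k)
      set i := m - (k + 1) with hidef
      have hi1 : i + 1 = m - k := by omega
      refine hocbf_single_step (ψ i) (α (i + 1))
        (hα_mono (i + 1) (Nat.le_add_left 1 i) (by omega))
        (hα0 (i + 1) (Nat.le_add_left 1 i) (by omega))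
        (hdiff i hi) ?_ (hinit i hi) t ht
      intro s hs
      have h1 : 0 ≤ ψ (i + 1) s := by rw [hi1]; exact ih hkm s hs
      rw [hrec i hi s hs] at h1
      exact h1
  intro i hi t ht
  have := key (m - i) (Nat.sub_le m i) t ht
  rwa [Nat.sub_sub_self hi.le] at this
end

section
/- Consider the control-affine system ẋ = f(x) + g(x)u on ℝⁿ with control u ∈ ℝ^q, where f : ℝⁿ → ℝⁿ and g(x) : ℝ^q → ℝⁿ is linear for each x. Let b : ℝⁿ → ℝ be differentiable, let α, α_f : ℝ → ℝ be extended class K functions (strictly increasing with value 0 at 0), let u_min ≤ u_max in ℝ^q (componentwise), and assume Db(y)[g(y)e_i] ≤ 0 for every y ∈ ℝⁿ and every standard basis vector e_i of ℝ^q. Define b_F(y) = Db(y)[f(y) + g(y)u_min] + α(b(y)). Let x : ℝ → ℝⁿ and u : ℝ → ℝ^q be such that x'(t) = f(x(t)) + g(x(t))u(t) for all t ≥ 0 and t ↦ b_F(x(t)) is differentiable with (d/dt) b_F(x(t)) + α_f(b_F(x(t))) ≥ 0 for all t ≥ 0 (the controller satisfies the CBF constraint enforcing the feasibility constraint). If b_F(x(0))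 ≥ 0, then for every t ≥ 0 there exists u' ∈ ℝ^q with u_min ≤ u' ≤ u_max componentwise and Db(x(t))[f(x(t)) + g(x(t))u'] + α(b(x(t))) ≥ 0; that is, the CBF constraint for b and the control bounds are conflict-free along the whole trajectory. -/
/-- Theorem 2 (relative-degree-one case): along a trajectory of the
control-affine system `ẋ = f(x) + g(x)u` on which a CBF constraint enforcing
the feasibility constraint `b_F(x) ≥ 0` is satisfied, and with
`b_F(x(0)) ≥ 0`, the CBF constraint for `b` and the control bounds are
conflict-free along the whole trajectory. -/
theorem feasibility_cbf_keeps_qp_feasible_relative_degree_one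
    (n q : ℕ)
    (f : (Fin n → ℝ) → (Fin n → ℝ))
    (g : (Fin n → ℝ) → ((Fin q → ℝ) →ₗ[ℝ] (Fin n → ℝ)))
    (b : (Fin n → ℝ) → ℝ) (hb : Differentiable ℝ b)
    (α αf : ℝ → ℝ)
    (hα_mono : StrictMono α) (hα0 : α 0 = 0)
    (hαf_mono : StrictMono αf) (hαf0 : αf 0 = 0)
    (uMin uMax : Fin q → ℝ) (hbounds : ∀ i, uMin i ≤ uMax i)
    (hLg_nonpos : ∀ y : Fin n → ℝ, ∀ i : Fin q,
      fderiv ℝ b y (g y (Pi.single i 1)) ≤ 0)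
    (bF : (Fin n → ℝ) → ℝ)
    (hbF_def : ∀ y : Fin n → ℝ,
      bF y = fderiv ℝ b y (f y + g y uMin) + α (b y))
    (x : ℝ → (Fin n → ℝ)) (u : ℝ → (Fin q → ℝ))
    (hx : ∀ t : ℝ, 0 ≤ t → HasDerivAt x (f (x t) + g (x t) (u t)) t)
    (hbFx_diff : ∀ t : ℝ, 0 ≤ t → DifferentiableAt ℝ (fun s => bF (x s)) t)
    (hbFx_cbf : ∀ t : ℝ, 0 ≤ t →
      deriv (fun s => bF (x s)) t + αf (bF (x t)) ≥ 0)
    (hbF0 : 0 ≤ bF (x 0)) :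
    ∀ t : ℝ, 0 ≤ t → ∃ u' : Fin q → ℝ,
      (∀ i, uMin i ≤ u' i) ∧ (∀ i, u' i ≤ uMax i) ∧
      fderiv ℝ b (x t) (f (x t) + g (x t) u') + α (b (x t)) ≥ 0 := by
  intro t ht
  refine ⟨uMin, fun i => le_refl _, hbounds, ?_⟩
  rw [ge_iff_le, ← hbF_def (x t)]
  by_contra hneg
  push_neg at hneg
  set h : ℝ → ℝ := fun s => bF (x s) with hh
  have hcont : ContinuousOn h (Set.Icc 0 t) := fun s hs =>
    (hbFx_diff s hs.1).continuousAt.continuousWithinAt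
  set S : Set ℝ := Set.Icc 0 t ∩ h ⁻¹' Set.Ici 0 with hS
  have hSclosed : IsClosed S :=
    hcont.preimage_isClosed_of_isClosed isClosed_Icc isClosed_Ici
  have h0S : (0 : ℝ) ∈ S := ⟨⟨le_refl 0, ht⟩, hbF0⟩
  have hSbdd : BddAbove S := ⟨t, fun s hs => hs.1.2⟩
  set T := sSup S with hT
  have hTS : T ∈ S := hSclosed.csSup_mem ⟨0, h0S⟩ hSbdd
  have hTle : T ≤ t := hTS.1.2
  have hT0 : 0 ≤ T := hTS.1.1
  have hTnonneg : 0 ≤ h T := hTS.2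
  have hTlt : T < t := by
    rcases lt_or_eq_of_le hTle with hlt | heq
    · exact hlt
    · exact absurd (heq ▸ hTnonneg) (not_le.mpr hneg)
  have hmono : StrictMonoOn h (Set.Icc T t) := by
    apply strictMonoOn_of_deriv_pos (convex_Icc T t)
    · exact hcont.mono (Set.Icc_subset_Icc hT0 le_rfl)
    · intro s hs
      rw [interior_Icc] at hs
      have hs0 : 0 ≤ s := le_of_lt (lt_of_le_of_lt hT0 hs.1)
      have hsneg : h s < 0 := by
        by_contra hge
        push_neg at hge
        have : s ∈ S := ⟨⟨hs0, le_of_lt hs.2⟩, hge⟩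
        exact absurd (le_csSup hSbdd this) (not_le.mpr hs.1)
      have h1 := hbFx_cbf s hs0
      have h2 : αf (h s) < 0 := by
        have := hαf_mono hsneg
        rwa [hαf0] at this
      linarith
  have := hmono (Set.left_mem_Icc.mpr (le_of_lt hTlt))
    (Set.right_mem_Icc.mpr (le_of_lt hTlt)) hTlt
  linarith
end

section
/- Consider the control-affine system ẋ = f(x) + g(x)u on ℝⁿ with control u ∈ ℝ^q, where f : ℝⁿ → ℝⁿ and g(x) : ℝ^q → ℝⁿ is linear for each x. Let b : ℝⁿ → ℝ be twice differentiable with relative degree two, i.e. Db(y)[g(y)w] = 0 for all y ∈ ℝⁿ and all w ∈ ℝ^q. Let α₁, α₂, α_f : ℝ → ℝ be extended class K functions and define ψ₁(y) = Db(y)[f(y)] + α₁(b(y)); assume ψ₁ is differentiable and Dψ₁(y)[g(y)e_i] ≤ 0 for every y and every standard basis vector e_i. Let u_min ≤ u_max in ℝ^q (componentwise) and define b_hF(y) = Dψ₁(y)[f(y) + g(y)u_min] + α₂(ψ₁(y)). Let x : ℝ → ℝⁿ and u : ℝ → ℝ^q satisfy x'(t) = f(x(t)) + g(x(t))u(t)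 for all t ≥ 0, and suppose t ↦ b_hF(x(t)) is differentiable with (d/dt) b_hF(x(t)) + α_f(b_hF(x(t))) ≥ 0 for all t ≥ 0. If b_hF(x(0)) ≥ 0, then for every t ≥ 0 there exists u' ∈ ℝ^q with u_min ≤ u' ≤ u_max componentwise and Dψ₁(x(t))[f(x(t)) + g(x(t))u'] + α₂(ψ₁(x(t))) ≥ 0; that is, the second-order HOCBF constraint and the control bounds are conflict-free along the whole trajectory. -/
/-- Theorem 4 instantiated with relative degree `m = 2`: along a trajectory on
which a CBF constraint enforcing the feasibility constraint `b_hF(x) ≥ 0` is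
satisfied, and with `b_hF(x(0)) ≥ 0`, the second-order HOCBF constraint and
the control bounds are conflict-free along the whole trajectory. -/
theorem feasibility_cbf_keeps_qp_feasible_relative_degree_two
    (n q : ℕ)
    (f : (Fin n → ℝ) → (Fin n → ℝ))
    (g : (Fin n → ℝ) → ((Fin q → ℝ) →ₗ[ℝ] (Fin n → ℝ)))
    (b : (Fin n → ℝ) → ℝ) (hb : Differentiable ℝ b)
    -- relative degree two: the control does not appear at first order
    (hrel2 : ∀ (y : Fin n → ℝ) (w : Fin q → ℝ), fderiv ℝ b y (g y w) = 0)
    (α₁ α₂ αf : ℝ → ℝ)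
    (hα₁_mono : StrictMono α₁) (hα₁0 : α₁ 0 = 0)
    (hα₂_mono : StrictMono α₂) (hα₂0 : α₂ 0 = 0)
    (hαf_mono : StrictMono αf) (hαf0 : αf 0 = 0)
    (ψ₁ : (Fin n → ℝ) → ℝ)
    (hψ₁_def : ∀ y : Fin n → ℝ, ψ₁ y = fderiv ℝ b y (f y) + α₁ (b y))
    (hψ₁ : Differentiable ℝ ψ₁)
    (hLgψ₁_nonpos : ∀ y : Fin n → ℝ, ∀ i : Fin q,
      fderiv ℝ ψ₁ y (g y (Pi.single i 1)) ≤ 0)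
    (uMin uMax : Fin q → ℝ) (hbounds : ∀ i, uMin i ≤ uMax i)
    (bhF : (Fin n → ℝ) → ℝ)
    (hbhF_def : ∀ y : Fin n → ℝ,
      bhF y = fderiv ℝ ψ₁ y (f y + g y uMin) + α₂ (ψ₁ y))
    (x : ℝ → (Fin n → ℝ)) (u : ℝ → (Fin q → ℝ))
    (hx : ∀ t : ℝ, 0 ≤ t → HasDerivAt x (f (x t) + g (x t) (u t)) t)
    (hbhFx_diff : ∀ t : ℝ, 0 ≤ t → DifferentiableAt ℝ (fun s => bhF (x s)) t)
    (hbhFx_cbf : ∀ t : ℝ, 0 ≤ t →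
      deriv (fun s => bhF (x s)) t + αf (bhF (x t)) ≥ 0)
    (hbhF0 : 0 ≤ bhF (x 0)) :
    ∀ t : ℝ, 0 ≤ t → ∃ u' : Fin q → ℝ,
      (∀ i, uMin i ≤ u' i) ∧ (∀ i, u' i ≤ uMax i) ∧
      fderiv ℝ ψ₁ (x t) (f (x t) + g (x t) u') + α₂ (ψ₁ (x t)) ≥ 0 := by
  intro t ht
  refine ⟨uMin, fun i => le_refl _, hbounds, ?_⟩
  rw [← hbhF_def]
  -- it suffices to show `0 ≤ bhF (x t)`
  set h : ℝ → ℝ := fun s => bhF (x s) with hh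
  have hcont : ∀ s : ℝ, 0 ≤ s → ContinuousAt h s := fun s hs =>
    (hbhFx_diff s hs).continuousAt
  show (0:ℝ) ≤ h t
  by_contra hneg
  push_neg at hneg
  -- h' agrees with h on [0,∞) and is continuous everywhere
  set h' : ℝ → ℝ := fun s => h (max s 0) with hh'
  have hh'cont : Continuous h' := by
    rw [continuous_iff_continuousAt]
    intro s
    have hm : ContinuousAt (fun r : ℝ => max r 0) s :=
      (continuous_id.max continuous_const).continuousAt
    exact ContinuousAt.comp (g := h) (f := fun r : ℝ => max r 0)
      (hcont (max s 0) (le_max_right _ _)) hm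
  have hh'eq : ∀ s : ℝ, 0 ≤ s → h' s = h s := by
    intro s hs; simp [hh', max_eq_left hs]
  set S : Set ℝ := Set.Icc 0 t ∩ h' ⁻¹' Set.Ici 0 with hS
  have hSclosed : IsClosed S := isClosed_Icc.inter (isClosed_Ici.preimage hh'cont)
  have h0S : (0:ℝ) ∈ S := by
    constructor
    · exact ⟨le_refl _, ht⟩
    · simpa [hh'eq 0 le_rfl] using hbhF0
  have hSbdd : BddAbove S := ⟨t, fun s hs => hs.1.2⟩
  have hSne : S.Nonempty := ⟨0, h0S⟩
  set t₀ := sSup S with ht₀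
  have ht₀S : t₀ ∈ S := hSclosed.csSup_mem hSne hSbdd
  have ht₀0 : 0 ≤ t₀ := ht₀S.1.1
  have ht₀t : t₀ ≤ t := ht₀S.1.2
  have ht₀pos : 0 ≤ h t₀ := by
    have := ht₀S.2
    simpa [hh'eq t₀ ht₀0] using this
  have ht₀lt : t₀ < t := by
    rcases lt_or_eq_of_le ht₀t with h1 | h1
    · exact h1
    · exfalso; rw [h1] at ht₀pos; linarith
  -- on (t₀, t], h is negative, hence deriv h > 0
  have hnegIoc : ∀ s ∈ Set.Ioc t₀ t, h s < 0 := by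
    intro s hs
    by_contra hc
    push_neg at hc
    have hsS : s ∈ S := by
      refine ⟨⟨le_trans ht₀0 hs.1.le, hs.2⟩, ?_⟩
      simpa [hh'eq s (le_trans ht₀0 hs.1.le)] using hc
    exact absurd (le_csSup hSbdd hsS) (not_le.mpr hs.1)
  have hderiv_pos : ∀ s ∈ Set.Ioo t₀ t, 0 < deriv h s := by
    intro s hs
    have hs0 : 0 ≤ s := le_trans ht₀0 hs.1.le
    have hαfneg : αf (h s) < 0 := by
      have := hαf_mono (hnegIoc s ⟨hs.1, hs.2.le⟩)
      rwa [hαf0] at this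
    have := hbhFx_cbf s hs0
    simp only [hh] at *
    linarith
  have hmono : StrictMonoOn h (Set.Icc t₀ t) := by
    apply strictMonoOn_of_deriv_pos (convex_Icc t₀ t)
    · intro s hs
      exact (hcont s (le_trans ht₀0 hs.1)).continuousWithinAt
    · intro s hs
      rw [interior_Icc] at hs
      exact hderiv_pos s hs
  have := hmono (Set.left_mem_Icc.mpr ht₀t) (Set.right_mem_Icc.mpr ht₀t) ht₀lt
  linarith
end
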